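/- For every automatic description mode R there exists c > 0 such that K_R(1^n) ≥ n/c − 1 for all n. Consequently there is no optimal automatic description mode: no mode R satisfies K_R(x) ≤ K_{R'}(x) + O(1) for all automatic description modes R'. -/

import Mathlib

/-- A finite automaton: a finite directed graph whose edges are labeled by pairs
of an optional input letter and an optional output letter (`none` = ε). -/
structure Automaton (A B : Type*) where
  n : ℕ
  edges : List (Fin n × (Option A × Option B) × Fin n)

namespace Automaton

/-- `Reads G s t u v` : along some directed path from `s` to `t` one reads the
pair of strings `(u, v)` (concatenating labels, ε contributing nothing). -/
inductive Reads {A B : Type*} (G : Automaton A B) :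
    Fin G.n → Fin G.n → List A → List B → Prop
  | nil (s : Fin G.n) : Reads G s s [] []
  | step {s t r : Fin G.n} {a : Option A} {b : Option B} {u : List A} {v : List B} :
      (s, (a, b), t) ∈ G.edges → Reads G t r u v →
      Reads G s r (a.toList ++ u) (b.toList ++ v)

/-- The relation realized by the automaton: pairs readable along some directed
path, with arbitrary start and end states. -/
def Rel {A B : Type*} (G : Automaton A B) (u : List A) (v : List B) : Prop :=
  ∃ s t : Fin G.n, G.Reads s t u v

end Automaton

/-- A relation is automatic if it is realized by some automaton. -/
def IsAutomatic {A B : Type*} (R : List A → List B → Prop) : Prop :=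
  ∃ G : Automaton A B, ∀ u v, R u v ↔ G.Rel u v

/-- `R` is O(1)-valued: some constant bounds the number of strings related to any `p`. -/
def BoundedValued {A B : Type*} (R : List A → List B → Prop) : Prop :=
  ∃ c : ℕ, ∀ p, {x | R p x}.Finite ∧ {x | R p x}.ncard ≤ c

/-- An automatic description mode: an O(1)-valued automatic relation on binary strings. -/
def IsDescriptionMode (R : List Bool → List Bool → Prop) : Prop :=
  IsAutomatic R ∧ BoundedValued R

/-- Automatic Kolmogorov complexity: minimal length of a description of `x`
(`⊤` if there is none). -/
noncomputable def autK (R : List Bool → List Bool → Prop) (x : List Bool) : ℕ∞ :=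
  sInf {n : ℕ∞ | ∃ p : List Bool, R p x ∧ n = p.length}

namespace Automaton

variable {A B : Type*} {G : Automaton A B}

theorem Reads.comp {s m t : Fin G.n} {u1 u2 : List A} {v1 v2 : List B}
    (h1 : G.Reads s m u1 v1) (h2 : G.Reads m t u2 v2) :
    G.Reads s t (u1 ++ u2) (v1 ++ v2) := by
  induction h1 with
  | nil => simpa
  | step e _ ih => simpa [List.append_assoc] using Reads.step e (ih h2)

theorem Reads.eps_cons' {s t : Fin G.n} {u : List A} {v : List B}
    (h : G.Reads s t u v) : ∀ (b : B) (v' : List B), u = [] → v = b :: v' →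
    ∃ q q' : Fin G.n, G.Reads s q [] [] ∧ (q, (none, some b), q') ∈ G.edges ∧
      G.Reads q' t [] v' := by
  induction h with
  | nil => intro b v' _ hv; exact absurd hv (by simp)
  | @step s t r a b0 u v e htail ih =>
    intro b v' hu hv
    cases a with
    | some a => simp at hu
    | none =>
      simp only [Option.toList_none, List.nil_append] at hu hv ⊢
      cases b0 with
      | none =>
        simp only [Option.toList_none, List.nil_append] at hv
        obtain ⟨q, q', h1, h2, h3⟩ := ih b v' hu hv
        exact ⟨q, q', by simpa using Reads.step e h1, h2, h3⟩
      | some bb =>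
        simp only [Option.toList_some, List.cons_append, List.nil_append,
          List.cons.injEq] at hv
        obtain ⟨rfl, rfl⟩ := hv
        subst hu
        exact ⟨s, t, Reads.nil s, e, htail⟩

theorem Reads.eps_cons {s t : Fin G.n} {b : B} {v : List B}
    (h : G.Reads s t [] (b :: v)) :
    ∃ q q' : Fin G.n, G.Reads s q [] [] ∧ (q, (none, some b), q') ∈ G.edges ∧
      G.Reads q' t [] v :=
  h.eps_cons' b v rfl rfl

theorem Reads.cons_input' {s t : Fin G.n} {u : List A} {v : List B}
    (h : G.Reads s t u v) : ∀ (a : A) (u' : List A), u = a :: u' →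
    ∃ (q q' : Fin G.n) (b : Option B) (v1 v2 : List B),
      v = v1 ++ b.toList ++ v2 ∧ G.Reads s q [] v1 ∧
      (q, (some a, b), q') ∈ G.edges ∧ G.Reads q' t u' v2 := by
  induction h with
  | nil => intro a u' hu; exact absurd hu (by simp)
  | @step s t r a0 b0 u v e htail ih =>
    intro a u' hu
    cases a0 with
    | some a0 =>
      simp only [Option.toList_some, List.cons_append, List.nil_append,
        List.cons.injEq] at hu
      obtain ⟨rfl, rfl⟩ := hu
      exact ⟨s, t, b0, [], v, by simp, Reads.nil s, e, htail⟩
    | none =>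
      simp only [Option.toList_none, List.nil_append] at hu
      obtain ⟨q, q', b, v1, v2, hv, h1, h2, h3⟩ := ih a u' hu
      exact ⟨q, q', b, b0.toList ++ v1, v2, by simp [hv, List.append_assoc],
        by simpa using Reads.step e h1, h2, h3⟩

theorem eps_pump_aux :
    ∀ (v : List B) (s t s0 : Fin G.n) (S : Finset (Fin G.n)) (vp : List B),
      G.Reads s t [] v → G.Reads s0 s [] vp →
      (∀ q ∈ S, ∃ v1 w, w ≠ [] ∧ vp = v1 ++ w ∧ G.Reads s0 q [] v1 ∧ G.Reads q s [] w) →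
      G.n < S.card + v.length →
      ∃ (q : Fin G.n) (v1 w v2 : List B), vp ++ v = v1 ++ w ++ v2 ∧ w ≠ [] ∧
        G.Reads s0 q [] v1 ∧ G.Reads q q [] w ∧ G.Reads q t [] v2 := by
  intro v
  induction v with
  | nil =>
    intro s t s0 S vp _ _ _ hcard
    have := Finset.card_le_univ S
    simp [Fintype.card_fin] at this
    simp at hcard
    omega
  | cons b v ih =>
    intro s t s0 S vp h hsp hS hcard
    obtain ⟨q, q', h1, e, h2⟩ := h.eps_cons
    have stepb : G.Reads q q' [] [b] := by simpa using Automaton.Reads.step e (Automaton.Reads.nil q')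
    by_cases hq : q ∈ S
    · obtain ⟨v1, w, hw, hvp, hr1, hr2⟩ := hS q hq
      refine ⟨q, v1, w, b :: v, ?_, hw, hr1, by simpa using hr2.comp h1, by simpa using Automaton.Reads.step e h2⟩
      simp [hvp, List.append_assoc]
    · have hnew : G.Reads s0 q' [] (vp ++ [b]) := by
        simpa using (hsp.comp h1).comp stepb
      have hinv : ∀ r ∈ insert q S, ∃ v1 w, w ≠ [] ∧ vp ++ [b] = v1 ++ w ∧
          G.Reads s0 r [] v1 ∧ G.Reads r q' [] w := by
        intro r hr
        rcases Finset.mem_insert.mp hr with rfl | hr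
        · exact ⟨vp, [b], by simp, rfl, by simpa using hsp.comp h1, stepb⟩
        · obtain ⟨v1, w, hw, hvp, hr1, hr2⟩ := hS r hr
          exact ⟨v1, w ++ [b], by simp, by rw [hvp]; simp [List.append_assoc],
            hr1, by simpa using (hr2.comp h1).comp stepb⟩
      have hcard' : G.n < (insert q S).card + v.length := by
        rw [Finset.card_insert_of_notMem hq]; simp at hcard ⊢; omega
      obtain ⟨r, v1, w, v2, hsplit, hw, hh1, hh2, hh3⟩ :=
        ih q' t s0 (insert q S) (vp ++ [b]) h2 hnew hinv hcard'
      exact ⟨r, v1, w, v2, by rw [← hsplit]; simp, hw, hh1, hh2, hh3⟩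

theorem eps_pump {s t : Fin G.n} {v : List B}
    (h : G.Reads s t [] v) (hl : G.n < v.length) :
    ∃ (q : Fin G.n) (v1 w v2 : List B), v = v1 ++ w ++ v2 ∧ w ≠ [] ∧
      G.Reads s q [] v1 ∧ G.Reads q q [] w ∧ G.Reads q t [] v2 := by
  have := eps_pump_aux v s t s ∅ [] h (Automaton.Reads.nil s) (by simp) (by simpa)
  simpa using this

theorem split_pump : ∀ (u : List A) (s t : Fin G.n) (v : List B),
    G.Reads s t u v → (G.n + 1) * (u.length + 1) < v.length →
    ∃ (q : Fin G.n) (u1 u2 : List A) (v1 w v2 : List B), u = u1 ++ u2 ∧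
      v = v1 ++ w ++ v2 ∧ w ≠ [] ∧
      G.Reads s q u1 v1 ∧ G.Reads q q [] w ∧ G.Reads q t u2 v2 := by
  intro u
  induction u with
  | nil =>
    intro s t v h hlen
    obtain ⟨q, v1, w, v2, hv, hw, h1, h2, h3⟩ := eps_pump h (by simp at hlen; omega)
    exact ⟨q, [], [], v1, w, v2, by simp, hv, hw, h1, h2, h3⟩
  | cons a u ih =>
    intro s t v h hlen
    obtain ⟨q, q', b, v1, v2, hv, h1, e, h2⟩ := h.cons_input' a u rfl
    by_cases hl : G.n < v1.length
    · obtain ⟨r, w1, w, w2, hv1, hw, hr1, hr2, hr3⟩ := eps_pump h1 hl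
      refine ⟨r, [], a :: u, w1, w, w2 ++ b.toList ++ v2, by simp, ?_, hw, hr1, hr2, ?_⟩
      · simp [hv, hv1, List.append_assoc]
      · have hstep : G.Reads q t (a :: u) (b.toList ++ v2) := by
          simpa using Automaton.Reads.step e h2
        simpa [List.append_assoc] using hr3.comp hstep
    · push_neg at hl
      have hv2 : (G.n + 1) * (u.length + 1) < v2.length := by
        have hb : b.toList.length ≤ 1 := by cases b <;> simp
        have hlv : v.length = v1.length + b.toList.length + v2.length := by
          simp [hv]; ring
        have hX : (G.n + 1) * ((a :: u).length + 1) =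
            (G.n + 1) * (u.length + 1) + (G.n + 1) := by simp; ring
        omega
      obtain ⟨r, u1, u2, w1, w, w2, hu', hv', hw, hq1, hq2, hq3⟩ := ih q' t v2 h2 hv2
      refine ⟨r, a :: u1, u2, v1 ++ b.toList ++ w1, w, w2, by simp [hu'], ?_, hw, ?_, hq2, hq3⟩
      · simp [hv, hv', List.append_assoc]
      · have hstep : G.Reads q r (a :: u1) (b.toList ++ w1) := by
          simpa using Automaton.Reads.step e hq1
        simpa [List.append_assoc] using h1.comp hstep

theorem Reads.cycle_pow {q : Fin G.n} {w : List B} (h : G.Reads q q [] w) :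
    ∀ k, G.Reads q q [] ((List.replicate k w).flatten) := by
  intro k
  induction k with
  | zero => simpa using Automaton.Reads.nil q
  | succ k ih => simpa [List.replicate_succ] using h.comp ih

end Automaton

theorem flatten_replicate_length {w : List Bool} (k : ℕ) :
    ((List.replicate k w).flatten).length = k * w.length := by
  induction k with
  | zero => simp
  | succ k ih => simp [List.replicate_succ, ih]; ring

theorem main_bound {R : List Bool → List Bool → Prop} (G : Automaton Bool Bool)
    (hG : ∀ u v, R u v ↔ G.Rel u v) (hB : ∀ p, {x | R p x}.Finite)
    {p x : List Bool} (h : R p x) : x.length ≤ (G.n + 1) * (p.length + 1) := by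
  by_contra hlen
  push_neg at hlen
  obtain ⟨s, t, hr⟩ := (hG p x).1 h
  obtain ⟨q, u1, u2, v1, w, v2, hu, hv, hw, h1, h2, h3⟩ :=
    Automaton.split_pump p s t x hr hlen
  have hmem : ∀ k, (v1 ++ (List.replicate k w).flatten ++ v2) ∈ {x | R p x} := by
    intro k
    rw [Set.mem_setOf_eq, hG]
    refine ⟨s, t, ?_⟩
    have := h1.comp ((h2.cycle_pow k).comp h3)
    simpa [← hu, List.append_assoc] using this
  have hwpos : 0 < w.length := List.length_pos_iff.mpr hw
  have hinj : Function.Injective (fun k => v1 ++ (List.replicate k w).flatten ++ v2) := by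
    intro k1 k2 hk
    have hlk := congrArg List.length hk
    simp only [List.length_append, flatten_replicate_length] at hlk
    have : k1 * w.length = k2 * w.length := by omega
    exact Nat.eq_of_mul_eq_mul_right hwpos this
  exact (Set.infinite_of_injective_forall_mem hinj hmem) (hB p)

theorem part1 {R : List Bool → List Bool → Prop} (hR : IsDescriptionMode R) :
    ∃ c : ℕ, 0 < c ∧ ∀ n : ℕ,
      (n : ℕ∞) ≤ (c : ℕ∞) * (autK R (List.replicate n true) + 1) := by
  obtain ⟨⟨G, hG⟩, ⟨cb, hb⟩⟩ := hR
  refine ⟨G.n + 1, Nat.succ_pos _, fun n => ?_⟩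
  by_cases hne : {m : ℕ∞ | ∃ p, R p (List.replicate n true) ∧ m = p.length}.Nonempty
  · obtain ⟨p, hp, hm⟩ := csInf_mem hne
    have hbnd := main_bound G hG (fun p => (hb p).1) hp
    rw [List.length_replicate] at hbnd
    rw [autK, hm]
    calc (n : ℕ∞) ≤ ((G.n + 1) * (p.length + 1) : ℕ) := Nat.cast_le.mpr hbnd
    _ = (↑(G.n + 1) : ℕ∞) * (↑p.length + 1) := by push_cast; ring
  · rw [Set.not_nonempty_iff_eq_empty] at hne
    rw [autK, hne, sInf_empty]
    have : (⊤ : ℕ∞) + 1 = ⊤ := rfl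
    rw [this, ENat.mul_top (by exact_mod_cast Nat.succ_ne_zero G.n)]
    exact le_top

def cycGraph (m : ℕ) : Automaton Bool Bool where
  n := m
  edges := (List.finRange m).map fun i =>
    (i, ((if i.val = m - 1 then some false else none), some true),
      ⟨(i.val + 1) % m, Nat.mod_lt _ i.pos⟩)

theorem cyc_edge {m : ℕ} (i : Fin (cycGraph m).n) :
    ((i : Fin (cycGraph m).n), ((if i.val = m - 1 then (some false : Option Bool) else none), (some true : Option Bool)),
      (⟨(i.val + 1) % m, Nat.mod_lt _ i.pos⟩ : Fin (cycGraph m).n)) ∈ (cycGraph m).edges := by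
  simp only [cycGraph, List.mem_map, List.mem_finRange]
  exact List.mem_map.mpr ⟨i, List.mem_finRange _, rfl⟩

theorem cyc_inv {m : ℕ} {s t : Fin (cycGraph m).n} {u v : List Bool}
    (h : (cycGraph m).Reads s t u v) :
    v = List.replicate v.length true ∧ v.length + s.val = u.length * m + t.val := by
  induction h with
  | nil => simp
  | @step s t r a b u v e htail ih =>
    obtain ⟨hrep, harith⟩ := ih
    simp only [cycGraph, List.mem_map, List.mem_finRange, true_and] at e
    obtain ⟨i, -, hi⟩ := List.mem_map.mp e
    replace hi : _ ∧ (_ ∧ _) ∧ _ := ⟨congrArg Prod.fst hi,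
      Prod.mk.inj (congrArg (fun x => x.2.1) hi), congrArg (fun x => x.2.2) hi⟩
    dsimp only at hi
    obtain ⟨rfl, ⟨h2, hb⟩, rfl⟩ := hi
    cases hb
    have hm : 0 < m := i.pos
    by_cases hc : i.val = m - 1
    · rw [if_pos hc] at h2
      cases h2.symm
      have hmod : (i.val + 1) % m = 0 := by
        rw [hc, Nat.sub_add_cancel hm, Nat.mod_self]
      simp only [Fin.val_mk, hmod] at harith
      constructor
      · simp only [Option.toList_some, List.cons_append, List.nil_append,
          List.length_cons, List.replicate_succ, List.cons.injEq, true_and]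
        exact hrep
      · have hl1 : ((some true : Option Bool).toList ++ v).length = v.length + 1 := by simp
        have hl2 : ((some false : Option Bool).toList ++ u).length = u.length + 1 := by simp
        rw [hl1, hl2]
        have key : (u.length + 1) * m = u.length * m + m := by ring
        rw [key]
        omega
    · rw [if_neg hc] at h2
      cases h2.symm
      have hlt : i.val + 1 < m := by
        have := i.isLt
        omega
      have hmod : (i.val + 1) % m = i.val + 1 := Nat.mod_eq_of_lt hlt
      simp only [Fin.val_mk, hmod] at harith
      constructor
      · simp only [Option.toList_some, List.cons_append, List.nil_append,
          List.length_cons, List.replicate_succ, List.cons.injEq, true_and]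
        exact hrep
      · have hl1 : ((some true : Option Bool).toList ++ v).length = v.length + 1 := by simp
        have hl2 : ((none : Option Bool).toList ++ u).length = u.length := by simp
        rw [hl1, hl2]
        omega

theorem cyc_path {m : ℕ} : ∀ (r : ℕ) (s t : Fin (cycGraph m).n), s.val + r = t.val →
    (cycGraph m).Reads s t [] (List.replicate r true) := by
  intro r
  induction r with
  | zero =>
    intro s t h
    have : s = t := Fin.ext (by omega)
    subst this
    exact Automaton.Reads.nil s
  | succ r ih =>
    intro s t h
    have hN : (cycGraph m).n = m := rfl
    have hne : s.val ≠ m - 1 := by have := t.isLt; omega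
    have e := cyc_edge (m := m) s
    rw [if_neg hne] at e
    have hlt : s.val + 1 < m := by have := t.isLt; omega
    have hmod : (s.val + 1) % m = s.val + 1 := Nat.mod_eq_of_lt hlt
    have hrec := ih ⟨(s.val + 1) % m, Nat.mod_lt _ s.pos⟩ t (by simp [hmod]; omega)
    simpa [List.replicate_succ] using Automaton.Reads.step e hrec

theorem cyc_wrap {m : ℕ} (s t : Fin (cycGraph m).n) (hs : s.val = m - 1) (ht : t.val = 0) :
    (cycGraph m).Reads s t [false] [true] := by
  have e := cyc_edge (m := m) s
  rw [if_pos hs] at e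
  have hmod : (s.val + 1) % m = 0 := by
    have hm : 0 < m := s.pos
    rw [hs, Nat.sub_add_cancel hm, Nat.mod_self]
  have htgt : (⟨(s.val + 1) % m, Nat.mod_lt _ s.pos⟩ : Fin (cycGraph m).n) = t :=
    Fin.ext (by simp [hmod, ht])
  rw [htgt] at e
  simpa using Automaton.Reads.step e (Automaton.Reads.nil t)

theorem cyc_loop {m : ℕ} (hm : 0 < m) (z : Fin (cycGraph m).n) (hz : z.val = 0) :
    (cycGraph m).Reads z z [false] (List.replicate m true) := by
  have h1 : (cycGraph m).Reads z ⟨m - 1, by show m - 1 < m; omega⟩ [] (List.replicate (m-1) true) :=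
    cyc_path (m - 1) z _ (by simp [hz])
  have h2 := cyc_wrap (m := m) ⟨m - 1, by show m - 1 < m; omega⟩ z (by simp) hz
  have h3 : List.replicate (m-1) true ++ [true] = List.replicate m true := by
    rw [← List.replicate_succ']
    congr 1
    omega
  simpa [h3] using h1.comp h2

theorem cyc_loops {m : ℕ} (hm : 0 < m) (z : Fin (cycGraph m).n) (hz : z.val = 0) (k : ℕ) :
    (cycGraph m).Reads z z (List.replicate k false) (List.replicate (k * m) true) := by
  induction k with
  | zero => simpa using Automaton.Reads.nil z
  | succ k ih =>
    have hcomp := (cyc_loop hm z hz).comp ih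
    have h3 : List.replicate m true ++ List.replicate (k * m) true
        = List.replicate ((k+1) * m) true := by
      rw [← List.replicate_add]
      congr 1
      ring
    simpa [List.replicate_succ, h3] using hcomp

theorem cyc_reach {m : ℕ} (hm : 0 < m) (n : ℕ) :
    (cycGraph m).Rel (List.replicate (n / m) false) (List.replicate n true) := by
  refine ⟨⟨0, hm⟩, ⟨n % m, Nat.mod_lt _ hm⟩, ?_⟩
  have h1 := cyc_loops hm ⟨0, hm⟩ rfl (n / m)
  have h2 : (cycGraph m).Reads ⟨0, hm⟩ ⟨n % m, Nat.mod_lt _ hm⟩ []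
      (List.replicate (n % m) true) := cyc_path _ _ _ (by simp)
  have h3 : List.replicate (n / m * m) true ++ List.replicate (n % m) true
      = List.replicate n true := by
    rw [← List.replicate_add]
    congr 1
    rw [Nat.mul_comm]
    exact Nat.div_add_mod n m
  simpa [h3] using h1.comp h2

theorem cyc_bounded (m : ℕ) (p : List Bool) :
    {x | (cycGraph m).Rel p x} ⊆
      ↑((Finset.Ico (p.length * m - (m-1)) (p.length * m + m)).image
        (fun L => List.replicate L true)) := by
  rintro x ⟨s, t, h⟩
  obtain ⟨hrep, harith⟩ := cyc_inv h
  simp only [Finset.coe_image, Set.mem_image, Finset.mem_coe, Finset.mem_Ico]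
  refine ⟨x.length, ?_, hrep.symm⟩
  have hs : (s : ℕ) < m := s.isLt
  have ht : (t : ℕ) < m := t.isLt
  constructor <;> omega

theorem cyc_autK (m : ℕ) (hm : 0 < m) (n : ℕ) :
    autK (cycGraph m).Rel (List.replicate n true) ≤ ((n / m : ℕ) : ℕ∞) := by
  apply sInf_le
  exact ⟨List.replicate (n / m) false, cyc_reach hm n, by simp⟩


/-- For every automatic description mode there is `c > 0` with
`K_R(1ⁿ) ≥ n/c − 1` (stated as `n ≤ c·(K_R(1ⁿ)+1)`); consequently there is no
optimal automatic description mode. -/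
theorem autK_ones_lower_and_no_optimal :
    (∀ R : List Bool → List Bool → Prop, IsDescriptionMode R →
      ∃ c : ℕ, 0 < c ∧ ∀ n : ℕ,
        (n : ℕ∞) ≤ (c : ℕ∞) * (autK R (List.replicate n true) + 1)) ∧
    ¬ ∃ R : List Bool → List Bool → Prop, IsDescriptionMode R ∧
        ∀ R' : List Bool → List Bool → Prop, IsDescriptionMode R' →
          ∃ c : ℕ, ∀ x : List Bool, autK R x ≤ autK R' x + c := by
  refine ⟨fun R hR => part1 hR, ?_⟩
  rintro ⟨R, hR, hopt⟩
  obtain ⟨c, hc, hlow⟩ := part1 hR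
  set m := 2 * c with hm
  have hmpos : 0 < m := by omega
  have hR' : IsDescriptionMode (cycGraph m).Rel := by
    refine ⟨⟨cycGraph m, fun _ _ => Iff.rfl⟩, ⟨2 * m, fun p => ?_⟩⟩
    constructor
    · exact Set.Finite.subset (Finset.finite_toSet _) (cyc_bounded m p)
    · have h1 := Set.ncard_le_ncard (cyc_bounded m p) (Finset.finite_toSet _)
      rw [Set.ncard_coe_finset] at h1
      have h2 := Finset.card_image_le
        (s := Finset.Ico (p.length * m - (m-1)) (p.length * m + m))
        (f := fun L => List.replicate L true)
      have h3 : (Finset.Ico (p.length * m - (m-1)) (p.length * m + m)).card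
          = (p.length * m + m) - (p.length * m - (m-1)) := Nat.card_Ico _ _
      omega
  obtain ⟨d, hd⟩ := hopt _ hR'
  set n := m * (d + 2) with hn
  have hdiv : n / m = d + 2 := by rw [hn]; exact Nat.mul_div_cancel_left _ hmpos
  have hK' : autK (cycGraph m).Rel (List.replicate n true) ≤ ((d + 2 : ℕ) : ℕ∞) := by
    have h := cyc_autK m hmpos n
    rwa [hdiv] at h
  have hKR : autK R (List.replicate n true) ≤ ((d + 2 : ℕ) : ℕ∞) + d :=
    le_trans (hd _) (add_le_add_left hK' _)
  have hfin := hlow n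
  have hle : (n : ℕ∞) ≤ (c : ℕ∞) * (((d + 2 : ℕ) : ℕ∞) + d + 1) :=
    le_trans hfin (mul_le_mul_right (add_le_add_left hKR 1) _)
  have hcast : (c : ℕ∞) * (((d + 2 : ℕ) : ℕ∞) + d + 1) = ((c * (2 * d + 3) : ℕ) : ℕ∞) := by
    push_cast
    ring
  rw [hcast] at hle
  have hnle : n ≤ c * (2 * d + 3) := Nat.cast_le.mp hle
  rw [hn, hm] at hnle
  have h4 : 2 * c * (d + 2) = c * (2 * d + 4) := by ring
  rw [h4] at hnle
  have h5 := Nat.le_of_mul_le_mul_left hnle hc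
  omega
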